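/- Let (v₁, v₂) be an orthonormal basis of ℝ², 0 < d₁ < d₂, n₁, n₂ > 1, u a unit vector in ℝ², and 1 ≤ s with s·d₁ < d₂. Set c = ⟨u, v₁⟩, s₁ = √((s² − 1)·c² + 1), s₂ = √((s² − 1)·(1 − c²) + 1), and let q_{i,j} = S_{u,s}(i·d₁·v₁ + j·d₂·v₂). For r > 0, let H_r be the simple graph on {0,…,n₁−1} × {0,…,n₂−1} in which distinct indices are adjacent iff ‖q_{i,j} − q_{i′,j′}‖₂ ≤ r. Then: (a) H_{s₁·d₁} has exactly n₂ connected components (the rows); and (b) H_{s₂·d₂} is connected. -/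

import Mathlib

set_option maxHeartbeats 1000000


open scoped RealInnerProductSpace

/-- The directional scaling map `S_{u,α} = U⁻¹ ⬝ diag(α,1,…,1) ⬝ U` on Euclidean space,
for an orthogonal base-change matrix `U` (with `U u = e₁`) and scaling factor `α`. -/
noncomputable def scalingMap {n : ℕ} [NeZero n] (U : Matrix (Fin n) (Fin n) ℝ) (α : ℝ) :
    EuclideanSpace ℝ (Fin n) →ₗ[ℝ] EuclideanSpace ℝ (Fin n) :=
  Matrix.toEuclideanLin (U⁻¹ * Matrix.diagonal (fun i : Fin n => if i = 0 then α else 1) * U)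

/-- The rotated grid point `p_{i,j} = i·d₁·v₁ + j·d₂·v₂` in `ℝ²`. -/
noncomputable def gridPoint (v₁ v₂ : EuclideanSpace ℝ (Fin 2)) (d₁ d₂ : ℝ) {n₁ n₂ : ℕ}
    (a : Fin n₁ × Fin n₂) : EuclideanSpace ℝ (Fin 2) :=
  ((a.1 : ℝ) * d₁) • v₁ + ((a.2 : ℝ) * d₂) • v₂

/-- The proximity graph at scale `r`: distinct vertices are adjacent iff their points are at
Euclidean distance at most `r` (the 1-skeleton of the Vietoris–Rips complex). -/
def proximityGraph {V : Type*} (f : V → EuclideanSpace ℝ (Fin 2)) (r : ℝ) : SimpleGraph V :=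
  SimpleGraph.fromRel fun a b => ‖f a - f b‖ ≤ r

private lemma toEucMul {n : ℕ} (A B : Matrix (Fin n) (Fin n) ℝ) (x : EuclideanSpace ℝ (Fin n)) :
    Matrix.toEuclideanLin (A * B) x = Matrix.toEuclideanLin A (Matrix.toEuclideanLin B x) := by
  simp [Matrix.toEuclideanLin_apply, Matrix.mulVec_mulVec]

private lemma innerPreserve {n : ℕ} (U : Matrix (Fin n) (Fin n) ℝ) (h : star U * U = 1)
    (x y : EuclideanSpace ℝ (Fin n)) :
    ⟪Matrix.toEuclideanLin U x, Matrix.toEuclideanLin U y⟫ = ⟪x, y⟫ := by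
  have key : Matrix.toEuclideanLin (star U) (Matrix.toEuclideanLin U y) = y := by
    rw [← toEucMul, h]
    simp [Matrix.toEuclideanLin_apply, Matrix.one_mulVec]
  calc ⟪Matrix.toEuclideanLin U x, Matrix.toEuclideanLin U y⟫
      = ⟪x, LinearMap.adjoint (Matrix.toEuclideanLin U) (Matrix.toEuclideanLin U y)⟫ :=
        (LinearMap.adjoint_inner_right _ _ _).symm
    _ = ⟪x, y⟫ := by
        rw [← Matrix.toEuclideanLin_conjTranspose_eq_adjoint, ← Matrix.star_eq_conjTranspose, key]

private lemma norm_scalingMap_sq (U : Matrix (Fin 2) (Fin 2) ℝ)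
    (hU : U ∈ Matrix.orthogonalGroup (Fin 2) ℝ)
    (u : EuclideanSpace ℝ (Fin 2)) (hUu : Matrix.toEuclideanLin U u = EuclideanSpace.single 0 1)
    (s : ℝ) (w : EuclideanSpace ℝ (Fin 2)) :
    ‖scalingMap U s w‖ ^ 2 = (s ^ 2 - 1) * ⟪u, w⟫ ^ 2 + ‖w‖ ^ 2 := by
  have h1 : star U * U = 1 := Matrix.mem_unitaryGroup_iff'.mp hU
  have h2 : U * star U = 1 := Matrix.mem_unitaryGroup_iff.mp hU
  have hinv : U⁻¹ = star U := Matrix.inv_eq_right_inv h2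
  set y := Matrix.toEuclideanLin U w with hy
  have hy0 : y 0 = ⟪u, w⟫ := by
    have h3 := innerPreserve U h1 u w
    rw [hUu] at h3
    rw [← h3, EuclideanSpace.inner_single_left]
    simp
    simp [hy, Matrix.toEuclideanLin_apply, Matrix.mulVec, dotProduct, Fin.sum_univ_two]
  set z := Matrix.toEuclideanLin (Matrix.diagonal (fun i : Fin 2 => if i = 0 then s else 1)) y
    with hz
  have hzc : ∀ i, z i = (if i = 0 then s else 1) * y i := by
    intro i
    simp [hz, Matrix.toEuclideanLin_apply, Matrix.mulVec_diagonal]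
    fin_cases i <;> simp
  have hS : scalingMap U s w = Matrix.toEuclideanLin (star U) z := by
    rw [scalingMap, hinv, toEucMul, toEucMul]
  have hstar : star (star U) * star U = 1 := by rw [star_star]; exact h2
  have e1 : ‖scalingMap U s w‖ ^ 2 = ⟪z, z⟫ := by
    rw [hS, ← real_inner_self_eq_norm_sq, innerPreserve _ hstar]
  have e2 : ‖w‖ ^ 2 = y 0 ^ 2 + y 1 ^ 2 := by
    rw [← real_inner_self_eq_norm_sq, ← innerPreserve U h1 w w, ← hy, PiLp.inner_apply]
    simp [Fin.sum_univ_two]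
  have e3 : ⟪z, z⟫ = s ^ 2 * y 0 ^ 2 + y 1 ^ 2 := by
    rw [PiLp.inner_apply]
    simp [Fin.sum_univ_two, hzc]
    ring
  rw [e1, e3, ← hy0, e2]
  ring

private lemma dist_sq (v₁ v₂ : EuclideanSpace ℝ (Fin 2))
    (hv₁ : ‖v₁‖ = 1) (hv₂ : ‖v₂‖ = 1) (hv₁₂ : ⟪v₁, v₂⟫ = 0) (d₁ d₂ : ℝ)
    (u : EuclideanSpace ℝ (Fin 2)) (s : ℝ)
    (U : Matrix (Fin 2) (Fin 2) ℝ) (hU : U ∈ Matrix.orthogonalGroup (Fin 2) ℝ)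
    (hUu : Matrix.toEuclideanLin U u = EuclideanSpace.single 0 1)
    {n₁ n₂ : ℕ} (a₁ b₁ : Fin n₁) (a₂ b₂ : Fin n₂) :
    ‖scalingMap U s (gridPoint v₁ v₂ d₁ d₂ (a₁, a₂)) -
        scalingMap U s (gridPoint v₁ v₂ d₁ d₂ (b₁, b₂))‖ ^ 2 =
      (s ^ 2 - 1) * (((a₁ : ℝ) - (b₁ : ℝ)) * d₁ * ⟪u, v₁⟫ +
          ((a₂ : ℝ) - (b₂ : ℝ)) * d₂ * ⟪u, v₂⟫) ^ 2 +
        ((a₁ : ℝ) - (b₁ : ℝ)) ^ 2 * d₁ ^ 2 + ((a₂ : ℝ) - (b₂ : ℝ)) ^ 2 * d₂ ^ 2 := by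
  have hdiff : gridPoint v₁ v₂ d₁ d₂ (a₁, a₂) - gridPoint v₁ v₂ d₁ d₂ (b₁, b₂) =
      (((a₁ : ℝ) - (b₁ : ℝ)) * d₁) • v₁ + (((a₂ : ℝ) - (b₂ : ℝ)) * d₂) • v₂ := by
    simp only [gridPoint]
    module
  rw [← map_sub, hdiff, norm_scalingMap_sq U hU u hUu]
  have hin : ⟪u, (((a₁ : ℝ) - (b₁ : ℝ)) * d₁) • v₁ + (((a₂ : ℝ) - (b₂ : ℝ)) * d₂) • v₂⟫ =
      ((a₁ : ℝ) - (b₁ : ℝ)) * d₁ * ⟪u, v₁⟫ + ((a₂ : ℝ) - (b₂ : ℝ)) * d₂ * ⟪u, v₂⟫ := by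
    rw [inner_add_right, real_inner_smul_right, real_inner_smul_right]
  have hnorm : ‖(((a₁ : ℝ) - (b₁ : ℝ)) * d₁) • v₁ + (((a₂ : ℝ) - (b₂ : ℝ)) * d₂) • v₂‖ ^ 2 =
      ((a₁ : ℝ) - (b₁ : ℝ)) ^ 2 * d₁ ^ 2 + ((a₂ : ℝ) - (b₂ : ℝ)) ^ 2 * d₂ ^ 2 := by
    rw [norm_add_sq_real, real_inner_smul_left, real_inner_smul_right, hv₁₂,
      norm_smul, norm_smul, hv₁, hv₂]
    simp [mul_pow, sq_abs]
    try ring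
  rw [hin, hnorm]
  ring

private lemma prox_adj {V : Type*} (f : V → EuclideanSpace ℝ (Fin 2)) (r : ℝ) (a b : V) :
    (proximityGraph f r).Adj a b ↔ a ≠ b ∧ ‖f a - f b‖ ≤ r := by
  rw [proximityGraph, SimpleGraph.fromRel_adj]
  constructor
  · rintro ⟨h1, h2 | h2⟩
    · exact ⟨h1, h2⟩
    · exact ⟨h1, by rwa [norm_sub_rev]⟩
  · rintro ⟨h1, h2⟩
    exact ⟨h1, Or.inl h2⟩

private lemma one_le_cast_sub_sq {m k : ℕ} (h : m ≠ k) : 1 ≤ ((m : ℝ) - (k : ℝ)) ^ 2 := by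
  rcases Nat.lt_or_ge m k with hlt | hge
  · have : (m : ℝ) + 1 ≤ (k : ℝ) := by exact_mod_cast hlt
    nlinarith
  · have hlt : k < m := lt_of_le_of_ne hge (Ne.symm h)
    have : (k : ℝ) + 1 ≤ (m : ℝ) := by exact_mod_cast hlt
    nlinarith

private lemma reach_fst {n₁ n₂ : ℕ} (G : SimpleGraph (Fin n₁ × Fin n₂))
    (h : ∀ (i i' : Fin n₁) (j : Fin n₂), (i' : ℕ) = (i : ℕ) + 1 → G.Adj (i, j) (i', j)) :
    ∀ (i i' : Fin n₁) (j : Fin n₂), G.Reachable (i, j) (i', j) := by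
  have key : ∀ (k : ℕ) (hk : k < n₁) (j : Fin n₂),
      G.Reachable (⟨k, hk⟩, j) (⟨0, Nat.lt_of_le_of_lt (Nat.zero_le _) hk⟩, j) := by
    intro k
    induction k with
    | zero => intro hk j; exact SimpleGraph.Reachable.refl _
    | succ m ih =>
      intro hk j
      have h1 : G.Adj (⟨m, Nat.lt_of_succ_lt hk⟩, j) (⟨m + 1, hk⟩, j) := h _ _ _ rfl
      exact (h1.symm.reachable).trans (ih _ j)
  intro i i' j
  exact (key i.1 i.2 j).trans (key i'.1 i'.2 j).symm

private lemma reach_snd {n₁ n₂ : ℕ} (G : SimpleGraph (Fin n₁ × Fin n₂))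
    (h : ∀ (i : Fin n₁) (j j' : Fin n₂), (j' : ℕ) = (j : ℕ) + 1 → G.Adj (i, j) (i, j')) :
    ∀ (i : Fin n₁) (j j' : Fin n₂), G.Reachable (i, j) (i, j') := by
  have key : ∀ (k : ℕ) (hk : k < n₂) (i : Fin n₁),
      G.Reachable (i, ⟨k, hk⟩) (i, ⟨0, Nat.lt_of_le_of_lt (Nat.zero_le _) hk⟩) := by
    intro k
    induction k with
    | zero => intro hk i; exact SimpleGraph.Reachable.refl _
    | succ m ih =>
      intro hk i
      have h1 : G.Adj (i, ⟨m, Nat.lt_of_succ_lt hk⟩) (i, ⟨m + 1, hk⟩) := h _ _ _ rfl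
      exact (h1.symm.reachable).trans (ih _ i)
  intro i j j'
  exact (key j.1 j.2 i).trans (key j'.1 j'.2 i).symm

private lemma reach_invariant {V : Type*} {β : Type*} (G : SimpleGraph V) (f : V → β)
    (h : ∀ a b, G.Adj a b → f a = f b) {a b : V} (hr : G.Reachable a b) : f a = f b := by
  obtain ⟨w⟩ := hr
  induction w with
  | nil => rfl
  | cons ha _ ih => exact (h _ _ ha).trans ih

/-- for the grid scaled by `S_{u,s}` with `1 ≤ s` and `s·d₁ < d₂`, and with
`c = ⟨u, v₁⟩`, `s₁ = √((s²−1)c²+1)`, `s₂ = √((s²−1)(1−c²)+1)`, the proximity graph at scale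
`s₁·d₁` has exactly `n₂` connected components (the rows), and the proximity graph at scale
`s₂·d₂` is connected. -/
theorem scaled_grid_proximityGraph_components (v₁ v₂ : EuclideanSpace ℝ (Fin 2))
    (hv₁ : ‖v₁‖ = 1) (hv₂ : ‖v₂‖ = 1) (hv₁₂ : ⟪v₁, v₂⟫ = 0)
    (d₁ d₂ : ℝ) (hd₁ : 0 < d₁) (hd₁₂ : d₁ < d₂)
    (n₁ n₂ : ℕ) (hn₁ : 1 < n₁) (hn₂ : 1 < n₂)
    (u : EuclideanSpace ℝ (Fin 2)) (hu : ‖u‖ = 1)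
    (s : ℝ) (hs : 1 ≤ s) (hsd : s * d₁ < d₂)
    (U : Matrix (Fin 2) (Fin 2) ℝ) (hU : U ∈ Matrix.orthogonalGroup (Fin 2) ℝ)
    (hUu : Matrix.toEuclideanLin U u = EuclideanSpace.single 0 1) :
    (∀ a b : Fin n₁ × Fin n₂,
      (proximityGraph (fun a : Fin n₁ × Fin n₂ => scalingMap U s (gridPoint v₁ v₂ d₁ d₂ a))
          (Real.sqrt ((s ^ 2 - 1) * ⟪u, v₁⟫ ^ 2 + 1) * d₁)).connectedComponentMk a =
        (proximityGraph (fun a : Fin n₁ × Fin n₂ => scalingMap U s (gridPoint v₁ v₂ d₁ d₂ a))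
          (Real.sqrt ((s ^ 2 - 1) * ⟪u, v₁⟫ ^ 2 + 1) * d₁)).connectedComponentMk b ↔
        a.2 = b.2) ∧
    Nat.card
      (proximityGraph (fun a : Fin n₁ × Fin n₂ => scalingMap U s (gridPoint v₁ v₂ d₁ d₂ a))
        (Real.sqrt ((s ^ 2 - 1) * ⟪u, v₁⟫ ^ 2 + 1) * d₁)).ConnectedComponent = n₂ ∧
    (proximityGraph (fun a : Fin n₁ × Fin n₂ => scalingMap U s (gridPoint v₁ v₂ d₁ d₂ a))
      (Real.sqrt ((s ^ 2 - 1) * (1 - ⟪u, v₁⟫ ^ 2) + 1) * d₂)).Connected := by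
  set c : ℝ := ⟪u, v₁⟫ with hc
  set c' : ℝ := ⟪u, v₂⟫ with hc'
  set f : Fin n₁ × Fin n₂ → EuclideanSpace ℝ (Fin 2) :=
    fun a => scalingMap U s (gridPoint v₁ v₂ d₁ d₂ a) with hf
  set r₁ : ℝ := Real.sqrt ((s ^ 2 - 1) * c ^ 2 + 1) * d₁ with hr₁
  set r₂ : ℝ := Real.sqrt ((s ^ 2 - 1) * (1 - c ^ 2) + 1) * d₂ with hr₂
  set G₁ : SimpleGraph (Fin n₁ × Fin n₂) := proximityGraph f r₁ with hG₁
  set G₂ : SimpleGraph (Fin n₁ × Fin n₂) := proximityGraph f r₂ with hG₂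
  -- Bessel
  have horth : Orthonormal ℝ ![v₁, v₂] := by
    constructor
    · intro i; fin_cases i <;> simpa
    · intro i j hij
      fin_cases i <;> fin_cases j <;>
        simp_all [real_inner_comm v₂ v₁]
  have hb : c ^ 2 + c' ^ 2 ≤ 1 := by
    have := horth.sum_inner_products_le (𝕜 := ℝ) u (s := Finset.univ)
    simp only [Fin.sum_univ_two, Matrix.cons_val_zero, Matrix.cons_val_one, Matrix.head_cons,
      Real.norm_eq_abs, sq_abs, hu, one_pow] at this
    have h1 : inner ℝ v₁ u = c := (real_inner_comm v₁ u).symm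
    have h2 : inner ℝ v₂ u = c' := (real_inner_comm v₂ u).symm
    rw [h1, h2] at this
    exact this
  have hc1 : c ^ 2 ≤ 1 := by nlinarith [sq_nonneg c']
  have hs2 : 1 ≤ s ^ 2 := by nlinarith
  have hd2pos : 0 < d₂ := lt_trans hd₁ hd₁₂
  have hsd2 : s ^ 2 * d₁ ^ 2 < d₂ ^ 2 := by
    have h0 : 0 < s * d₁ := by positivity
    nlinarith [mul_self_lt_mul_self h0.le hsd]
  have hr₁nn : 0 ≤ r₁ := mul_nonneg (Real.sqrt_nonneg _) hd₁.le
  have hr₂nn : 0 ≤ r₂ := mul_nonneg (Real.sqrt_nonneg _) hd2pos.le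
  have hr₁sq : r₁ ^ 2 = ((s ^ 2 - 1) * c ^ 2 + 1) * d₁ ^ 2 := by
    have : (0:ℝ) ≤ (s ^ 2 - 1) * c ^ 2 + 1 :=
      add_nonneg (mul_nonneg (by linarith) (sq_nonneg c)) zero_le_one
    rw [hr₁, mul_pow, Real.sq_sqrt this]
  have hr₂sq : r₂ ^ 2 = ((s ^ 2 - 1) * (1 - c ^ 2) + 1) * d₂ ^ 2 := by
    have : (0:ℝ) ≤ (s ^ 2 - 1) * (1 - c ^ 2) + 1 :=
      add_nonneg (mul_nonneg (by linarith) (by linarith)) zero_le_one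
    rw [hr₂, mul_pow, Real.sq_sqrt this]
  have hD := dist_sq v₁ v₂ hv₁ hv₂ hv₁₂ d₁ d₂ u s U hU hUu (n₁ := n₁) (n₂ := n₂)
  -- norm ≤ r ↔ norm² ≤ r²
  have hle_iff : ∀ (x : EuclideanSpace ℝ (Fin 2)) (r : ℝ), 0 ≤ r →
      (‖x‖ ≤ r ↔ ‖x‖ ^ 2 ≤ r ^ 2) :=
    fun x r hr => (pow_le_pow_iff_left₀ (norm_nonneg _) hr two_ne_zero).symm
  -- horizontal edges in G₁
  have hedge1 : ∀ (i i' : Fin n₁) (j : Fin n₂), (i' : ℕ) = (i : ℕ) + 1 → G₁.Adj (i, j) (i', j) := by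
    intro i i' j hii
    rw [hG₁, prox_adj]
    refine ⟨fun hcon => by simp only [Prod.mk.injEq] at hcon; omega, ?_⟩
    rw [hle_iff _ _ hr₁nn]
    apply le_of_eq
    rw [hD i i' j j, hr₁sq]
    have hcast : ((i' : ℕ) : ℝ) = ((i : ℕ) : ℝ) + 1 := by exact_mod_cast hii
    rw [hcast]
    ring
  -- no cross-row edges in G₁
  have hne : ∀ a b : Fin n₁ × Fin n₂, G₁.Adj a b → a.2 = b.2 := by
    intro a b hadj
    by_contra hne
    rw [hG₁, prox_adj, hle_iff _ _ hr₁nn] at hadj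
    obtain ⟨-, hle2⟩ := hadj
    have hD' := hD a.1 b.1 a.2 b.2
    simp only [Prod.mk.eta] at hD'
    rw [hD', hr₁sq] at hle2
    have hy : 1 ≤ ((a.2 : ℝ) - (b.2 : ℝ)) ^ 2 :=
      one_le_cast_sub_sq (fun h => hne (Fin.ext h))
    have hT : 0 ≤ (s ^ 2 - 1) *
        (((a.1 : ℝ) - (b.1 : ℝ)) * d₁ * c + ((a.2 : ℝ) - (b.2 : ℝ)) * d₂ * c') ^ 2 :=
      mul_nonneg (by linarith) (sq_nonneg _)
    have hX : 0 ≤ ((a.1 : ℝ) - (b.1 : ℝ)) ^ 2 * d₁ ^ 2 := mul_nonneg (sq_nonneg _) (sq_nonneg _)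
    have hY : d₂ ^ 2 ≤ ((a.2 : ℝ) - (b.2 : ℝ)) ^ 2 * d₂ ^ 2 := by nlinarith [sq_nonneg d₂]
    have hR : ((s ^ 2 - 1) * c ^ 2 + 1) * d₁ ^ 2 ≤ s ^ 2 * d₁ ^ 2 := by
      nlinarith [mul_nonneg (mul_nonneg (show (0:ℝ) ≤ s ^ 2 - 1 by linarith)
        (show (0:ℝ) ≤ 1 - c ^ 2 by linarith)) (sq_nonneg d₁)]
    linarith
  -- part 1
  have hpart1 : ∀ a b : Fin n₁ × Fin n₂,
      G₁.connectedComponentMk a = G₁.connectedComponentMk b ↔ a.2 = b.2 := by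
    intro a b
    constructor
    · intro h
      exact reach_invariant G₁ (fun x => x.2) hne (SimpleGraph.ConnectedComponent.exact h)
    · intro h
      have hr : G₁.Reachable (a.1, a.2) (b.1, b.2) := by
        rw [← h]
        exact reach_fst G₁ hedge1 a.1 b.1 a.2
      exact SimpleGraph.ConnectedComponent.sound (by simpa using hr)
  refine ⟨hpart1, ?_, ?_⟩
  · -- card
    have h0 : 0 < n₁ := by omega
    have e : G₁.ConnectedComponent ≃ Fin n₂ :=
      { toFun := SimpleGraph.ConnectedComponent.lift (fun a => a.2)
          (fun v w p _ => reach_invariant G₁ (fun x => x.2) hne ⟨p⟩)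
        invFun := fun j => G₁.connectedComponentMk (⟨0, h0⟩, j)
        left_inv := by
          refine SimpleGraph.ConnectedComponent.ind fun v => ?_
          simp only [SimpleGraph.ConnectedComponent.lift_mk]
          exact (hpart1 _ _).mpr rfl
        right_inv := fun j => rfl }
    rw [Nat.card_congr e, Nat.card_eq_fintype_card, Fintype.card_fin]
  · -- connectivity of G₂
    have hedge2h : ∀ (i i' : Fin n₁) (j : Fin n₂), (i' : ℕ) = (i : ℕ) + 1 →
        G₂.Adj (i, j) (i', j) := by
      intro i i' j hii
      rw [hG₂, prox_adj]
      refine ⟨fun hcon => by simp only [Prod.mk.injEq] at hcon; omega, ?_⟩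
      rw [hle_iff _ _ hr₂nn, hD i i' j j, hr₂sq]
      have hcast : ((i' : ℕ) : ℝ) = ((i : ℕ) : ℝ) + 1 := by exact_mod_cast hii
      rw [hcast]
      nlinarith [hsd2, mul_nonneg (mul_nonneg (show (0:ℝ) ≤ s ^ 2 - 1 by linarith)
        (show (0:ℝ) ≤ 1 - c ^ 2 by linarith)) (sq_nonneg d₁),
        mul_nonneg (mul_nonneg (show (0:ℝ) ≤ s ^ 2 - 1 by linarith)
        (show (0:ℝ) ≤ 1 - c ^ 2 by linarith)) (sq_nonneg d₂)]
    have hedge2v : ∀ (i : Fin n₁) (j j' : Fin n₂), (j' : ℕ) = (j : ℕ) + 1 →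
        G₂.Adj (i, j) (i, j') := by
      intro i j j' hjj
      rw [hG₂, prox_adj]
      refine ⟨fun hcon => by simp only [Prod.mk.injEq] at hcon; omega, ?_⟩
      rw [hle_iff _ _ hr₂nn, hD i i j j', hr₂sq]
      have hcast : ((j' : ℕ) : ℝ) = ((j : ℕ) : ℝ) + 1 := by exact_mod_cast hjj
      rw [hcast]
      nlinarith [mul_nonneg (mul_nonneg (show (0:ℝ) ≤ s ^ 2 - 1 by linarith)
        (show (0:ℝ) ≤ 1 - c ^ 2 - c' ^ 2 by linarith)) (sq_nonneg d₂)]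
    haveI : Nonempty (Fin n₁ × Fin n₂) := ⟨(⟨0, by omega⟩, ⟨0, by omega⟩)⟩
    refine ⟨fun a b => ?_⟩
    have h1 : G₂.Reachable (a.1, a.2) (b.1, a.2) := reach_fst G₂ hedge2h a.1 b.1 a.2
    have h2 : G₂.Reachable (b.1, a.2) (b.1, b.2) := reach_snd G₂ hedge2v b.1 a.2 b.2
    simpa using h1.trans h2
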